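/- arXiv:2510.12066 — 5 statements merged into one kernel-verified Lean document; each statement's English description precedes it below -/
import Mathlib

section
/- For every stochastic dynamical system ν on a countable type S and all states x, y, z ∈ S, the proper time is submultiplicative: τ_ν(x→z) ≤ τ_ν(x→y) · τ_ν(y→z) (as an inequality in [0,∞]). In particular, concatenating a trajectory from x to y realizing (or approximating) τ_ν(x→y) with one from y to z realizing τ_ν(y→z) yields a trajectory whose length-to-probability ratio is at most the product, since the concatenation has length T₁ + T₂ − 1 ≤ T₁·T₂ and probability ν₁·ν₂. -/
open scoped ENNReal NNReal
/-- The probability of a trajectory `h = (s₁, …, sₙ)` under the transition kernel `ν`: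
the product of the transition probabilities along adjacent pairs
(so a length-1 trajectory has probability 1). -/
def trajProb {S : Type*} (ν : S → S → NNReal) (h : List S) : NNReal :=
  ((h.zip h.tail).map fun p => ν p.1 p.2).prod

/-- The proper time `τ_ν(u → v)`: the infimum, over all trajectories `h` from `u` to `v`
with positive probability, of `T(h) / ν(h)`, taken in `[0, ∞]`
(so it is `∞` if no such trajectory exists). -/
noncomputable def properTime {S : Type*} (ν : S → S → NNReal) (u v : S) : ℝ≥0∞ :=
  ⨅ h ∈ {h : List S | h.head? = some u ∧ h.getLast? = some v ∧ 0 < trajProb ν h},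
    (h.length : ℝ≥0∞) / (trajProb ν h : ℝ≥0∞)

lemma trajProb_singleton {S : Type*} (ν : S → S → NNReal) (a : S) :
    trajProb ν [a] = 1 := rfl

lemma trajProb_cons_cons {S : Type*} (ν : S → S → NNReal) (a b : S) (l : List S) :
    trajProb ν (a :: b :: l) = ν a b * trajProb ν (b :: l) := by
  simp [trajProb]

lemma trajProb_append {S : Type*} (ν : S → S → NNReal) :
    ∀ (h1 : List S) (y : S) (t : List S), h1.getLast? = some y →
      trajProb ν (h1 ++ t) = trajProb ν h1 * trajProb ν (y :: t)
  | [], y, t, h => by simp at h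
  | [a], y, t, h => by
      simp only [List.getLast?_singleton, Option.some.injEq] at h
      subst h
      simp [trajProb_singleton]
  | a :: b :: l, y, t, h => by
      have hlast : (b :: l).getLast? = some y := by
        rw [List.getLast?_cons_cons] at h; exact h
      have ih := trajProb_append ν (b :: l) y t hlast
      simp only [List.cons_append, trajProb_cons_cons]
      simp only [List.cons_append] at ih
      rw [ih]; ring

lemma one_le_properTime {S : Type*} (ν : S → S → NNReal)
    (hν : ∀ s : S, ∑' t : S, ν s t = 1) (u v : S) : 1 ≤ properTime ν u v := by
  have hle : ∀ s t : S, ν s t ≤ 1 := by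
    intro s t
    have hs : Summable (fun t => ν s t) := by
      by_contra hns
      have h1 := hν s
      rw [tsum_eq_zero_of_not_summable hns] at h1
      exact one_ne_zero h1.symm
    calc ν s t ≤ ∑' t : S, ν s t := Summable.le_tsum hs t (fun _ _ => zero_le)
    _ = 1 := hν s
  refine le_iInf₂ fun h hh => ?_
  obtain ⟨hhead, _, hpos⟩ := hh
  have hp1 : trajProb ν h ≤ 1 := by
    have := List.prod_le_pow_card ((h.zip h.tail).map fun p => ν p.1 p.2) 1 ?_
    · simpa [trajProb] using this
    · intro a ha
      obtain ⟨p, _, rfl⟩ := List.mem_map.1 ha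
      exact hle _ _
  have hlen : 1 ≤ h.length := by
    cases h with
    | nil => simp at hhead
    | cons a l => simp
  rw [ENNReal.le_div_iff_mul_le (Or.inl (by exact_mod_cast hpos.ne')) (Or.inl ENNReal.coe_ne_top),
    one_mul]
  calc (trajProb ν h : ℝ≥0∞) ≤ 1 := by exact_mod_cast hp1
  _ ≤ (h.length : ℝ≥0∞) := by exact_mod_cast hlen

/-- **Proper time is submultiplicative.** For every stochastic dynamical system `ν` on a
countable type `S` and all states `x, y, z`,
`τ_ν(x→z) ≤ τ_ν(x→y) · τ_ν(y→z)` (as an inequality in `[0,∞]`). -/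
theorem properTime_submultiplicative {S : Type*} [Countable S]
    (ν : S → S → NNReal) (hν : ∀ s : S, ∑' t : S, ν s t = 1)
    (x y z : S) :
    properTime ν x z ≤ properTime ν x y * properTime ν y z := by
  -- key pointwise estimate
  have key : ∀ h1 ∈ {h : List S | h.head? = some x ∧ h.getLast? = some y ∧ 0 < trajProb ν h},
      ∀ h2 ∈ {h : List S | h.head? = some y ∧ h.getLast? = some z ∧ 0 < trajProb ν h},
      properTime ν x z ≤
        ((h1.length : ℝ≥0∞) / (trajProb ν h1 : ℝ≥0∞)) *
        ((h2.length : ℝ≥0∞) / (trajProb ν h2 : ℝ≥0∞)) := by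
    rintro h1 ⟨hh1, hl1, hp1⟩ h2 ⟨hh2, hl2, hp2⟩
    obtain ⟨t, rfl⟩ : ∃ t, h2 = y :: t := by
      cases h2 with
      | nil => simp at hh2
      | cons a l =>
        obtain rfl : a = y := by simpa using hh2
        exact ⟨l, rfl⟩
    set h := h1 ++ t with hdef
    have hne1 : h1 ≠ [] := fun e => by simp [e] at hl1
    have hprob : trajProb ν h = trajProb ν h1 * trajProb ν (y :: t) :=
      trajProb_append ν h1 y t hl1
    have hmem : h ∈ {h : List S | h.head? = some x ∧ h.getLast? = some z ∧ 0 < trajProb ν h} := by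
      refine ⟨?_, ?_, ?_⟩
      · cases h1 with
        | nil => exact absurd rfl hne1
        | cons a l =>
          simp only [hdef, List.cons_append, List.head?_cons, Option.some.injEq]
          simpa using hh1
      · cases t with
        | nil =>
          simp only [hdef, List.append_nil]
          simp only [List.getLast?_singleton, Option.some.injEq] at hl2
          rw [hl1, hl2]
        | cons b u =>
          rw [hdef, List.getLast?_append_of_ne_nil h1 (by simp)]
          simpa using hl2
      · rw [hprob]; exact mul_pos hp1 hp2
    have hlen : (h.length : ℝ≥0∞) ≤ (h1.length : ℝ≥0∞) * ((y :: t).length : ℝ≥0∞) := by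
      have h1pos : 1 ≤ h1.length := List.length_pos_iff.2 hne1
      have : h.length ≤ h1.length * (y :: t).length := by
        have : h.length = h1.length + t.length := by simp [hdef]
        rw [this]
        simp only [List.length_cons]
        calc h1.length + t.length ≤ h1.length + h1.length * t.length := by
              nlinarith [h1pos]
        _ = h1.length * (t.length + 1) := by ring
      exact_mod_cast this
    calc properTime ν x z ≤ (h.length : ℝ≥0∞) / (trajProb ν h : ℝ≥0∞) :=
          iInf₂_le h hmem
    _ ≤ ((h1.length : ℝ≥0∞) * ((y :: t).length : ℝ≥0∞)) /
          ((trajProb ν h1 : ℝ≥0∞) * (trajProb ν (y :: t) : ℝ≥0∞)) := by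
        rw [hprob]; push_cast
        exact ENNReal.div_le_div hlen le_rfl
    _ = ((h1.length : ℝ≥0∞) / (trajProb ν h1 : ℝ≥0∞)) *
          (((y :: t).length : ℝ≥0∞) / (trajProb ν (y :: t) : ℝ≥0∞)) := by
        have hp1' : (trajProb ν h1 : ℝ≥0∞) ≠ 0 := by exact_mod_cast hp1.ne'
        rw [div_eq_mul_inv, div_eq_mul_inv, div_eq_mul_inv,
          ENNReal.mul_inv (Or.inl hp1') (Or.inl ENNReal.coe_ne_top)]
        ring
  -- now assemble
  by_cases hA : properTime ν x y = ∞
  · rw [hA, ENNReal.top_mul]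
    · exact le_top
    · exact fun h => by simpa [h] using one_le_properTime ν hν y z
  by_cases hB : properTime ν y z = ∞
  · rw [hB, ENNReal.mul_top]
    · exact le_top
    · exact fun h => by simpa [h] using one_le_properTime ν hν x y
  -- both finite: rewrite as iInf over subtypes
  have eA : properTime ν x y =
      ⨅ h : {h : List S // h.head? = some x ∧ h.getLast? = some y ∧ 0 < trajProb ν h},
        ((h : List S).length : ℝ≥0∞) / (trajProb ν (h : List S) : ℝ≥0∞) := by
    rw [properTime, iInf_subtype']; rfl
  have eB : properTime ν y z =
      ⨅ h : {h : List S // h.head? = some y ∧ h.getLast? = some z ∧ 0 < trajProb ν h},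
        ((h : List S).length : ℝ≥0∞) / (trajProb ν (h : List S) : ℝ≥0∞) := by
    rw [properTime, iInf_subtype']; rfl
  rw [eA, eB]
  refine ENNReal.le_iInf_mul_iInf ?_ ?_ ?_
  · by_contra hc
    push_neg at hc
    have : properTime ν x y = ∞ := by
      rw [eA]
      exact le_antisymm le_top (le_iInf fun h => (hc h).ge)
    exact hA this
  · by_contra hc
    push_neg at hc
    have : properTime ν y z = ∞ := by
      rw [eB]
      exact le_antisymm le_top (le_iInf fun h => (hc h).ge)
    exact hB this
  · rintro ⟨h1, m1⟩ ⟨h2, m2⟩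
    exact key h1 m1 h2 m2
end

section
/- Let ν be a stochastic dynamical system on a countable type S, let u ∈ S, and let C ≥ 1 be a real number. Then the set of trajectories h starting at u with ν(h) > 0 and T(h)/ν(h) ≤ C is finite, with cardinality at most C·(1 + log C) (natural logarithm). (This is the counting bound underlying Levin tree search: any such trajectory has length t ≤ C and probability at least t/C, so there are at most C/t of them for each length t, and summing C/t over 1 ≤ t ≤ C gives at most C(1 + log C).) -/
open scoped ENNReal NNReal
namespace LevinAux

variable {S : Type*} (ν : S → S → NNReal)

lemma trajProb_cons (s b : S) (l : List S) (hl : l.head? = some b) :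
    trajProb ν (s :: l) = ν s b * trajProb ν l := by
  cases l with
  | nil => simp at hl
  | cons c r =>
    obtain rfl : c = b := by simpa using hl
    simp [trajProb]

lemma summable_nu (hν : ∀ s : S, ∑' t : S, ν s t = 1) (s : S) : Summable (ν s) := by
  by_contra hns
  have := tsum_eq_zero_of_not_summable hns
  rw [hν s] at this
  exact one_ne_zero this

lemma nu_le_one (hν : ∀ s : S, ∑' t : S, ν s t = 1) (s t : S) : ν s t ≤ 1 := by
  rw [← hν s]
  exact Summable.le_tsum (summable_nu ν hν s) t (fun _ _ => zero_le)

lemma trajProb_le_one (hν : ∀ s : S, ∑' t : S, ν s t = 1) (h : List S) :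
    trajProb ν h ≤ 1 := by
  induction h with
  | nil => simp [trajProb]
  | cons a l ih =>
    cases l with
    | nil => simp [trajProb]
    | cons b r =>
      rw [trajProb_cons ν a b (b :: r) rfl]
      calc ν a b * trajProb ν (b :: r) ≤ 1 * 1 :=
        mul_le_mul' (nu_le_one ν hν a b) ih
      _ = 1 := one_mul 1

/-- The equivalence between pairs (b, trajectory of length n+1 from b) and
trajectories of length n+2 from s. -/
noncomputable def consEquiv (s : S) (n : ℕ) :
    (Σ b : S, {l : List S // l.length = n + 1 ∧ l.head? = some b}) ≃
      {h : List S // h.length = n + 2 ∧ h.head? = some s} := by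
  apply Equiv.ofBijective
    (fun x => ⟨s :: x.2.1, by simp [x.2.2.1], by simp⟩ :
      (Σ b : S, {l : List S // l.length = n + 1 ∧ l.head? = some b}) →
        {h : List S // h.length = n + 2 ∧ h.head? = some s})
  constructor
  · rintro ⟨b, l, hl⟩ ⟨b', l', hl'⟩ hx
    simp only [Subtype.mk.injEq, List.cons.injEq, true_and] at hx
    have hb : b = b' := by
      have := hl.2
      rw [hx, hl'.2] at this
      exact (Option.some_injective _ this).symm
    subst hb
    simp [hx]
  · rintro ⟨h, hlen, hhead⟩
    cases h with
    | nil => simp at hhead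
    | cons a t =>
      obtain rfl : a = s := by simpa using hhead
      cases t with
      | nil => simp at hlen
      | cons b r =>
        refine ⟨⟨b, ⟨b :: r, by simpa using hlen, rfl⟩⟩, rfl⟩

lemma tsum_trajProb [Countable S] (hν : ∀ s : S, ∑' t : S, ν s t = 1) :
    ∀ (n : ℕ) (s : S),
      ∑' h : {h : List S // h.length = n + 1 ∧ h.head? = some s},
        (trajProb ν h.1 : ℝ≥0∞) = 1 := by
  intro n
  induction n with
  | zero =>
    intro s
    rw [tsum_eq_single (⟨[s], rfl, rfl⟩ :
        {h : List S // h.length = 0 + 1 ∧ h.head? = some s})]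
    · simp [trajProb]
    · rintro ⟨h, hlen, hhead⟩ hne
      exfalso
      apply hne
      cases h with
      | nil => simp at hlen
      | cons a t =>
        obtain rfl : a = s := by simpa using hhead
        obtain rfl : t = [] := by simpa using hlen
        rfl
  | succ n ih =>
    intro s
    rw [← Equiv.tsum_eq (consEquiv s n)]
    have : ∀ x : (Σ b : S, {l : List S // l.length = n + 1 ∧ l.head? = some b}),
        (trajProb ν ((consEquiv s n) x).1 : ℝ≥0∞)
          = (ν s x.1 : ℝ≥0∞) * (trajProb ν x.2.1 : ℝ≥0∞) := by
      rintro ⟨b, l, hl⟩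
      simp only [consEquiv, Equiv.ofBijective_apply]
      show (trajProb ν (s :: l) : ℝ≥0∞) = _
      rw [trajProb_cons ν s b l hl.2]
      push_cast
      ring
    rw [tsum_congr this, ENNReal.tsum_sigma']
    have h2 : ∀ b : S,
        ∑' l : {l : List S // l.length = n + 1 ∧ l.head? = some b},
          (ν s b : ℝ≥0∞) * (trajProb ν l.1 : ℝ≥0∞) = (ν s b : ℝ≥0∞) := by
      intro b
      rw [ENNReal.tsum_mul_left, ih b, mul_one]
    rw [tsum_congr h2, ← ENNReal.coe_tsum (summable_nu ν hν s), hν s, ENNReal.coe_one]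

end LevinAux

/-- **Levin-search counting bound.** For every state `u` and every real `C ≥ 1`, the set of
trajectories `h` starting at `u` with `ν(h) > 0` and `T(h)/ν(h) ≤ C` is finite, with at most
`C · (1 + log C)` elements (natural logarithm). -/
theorem finite_fast_trajectories {S : Type*} [Countable S]
    (ν : S → S → NNReal) (hν : ∀ s : S, ∑' t : S, ν s t = 1)
    (u : S) (C : ℝ) (hC : 1 ≤ C) :
    {h : List S | h.head? = some u ∧ 0 < trajProb ν h ∧
        (h.length : ℝ) / (trajProb ν h : ℝ) ≤ C}.Finite ∧
    (Nat.card {h : List S | h.head? = some u ∧ 0 < trajProb ν h ∧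
        (h.length : ℝ) / (trajProb ν h : ℝ) ≤ C} : ℝ)
      ≤ C * (1 + Real.log C) := by
  classical
  have hC0 : (0:ℝ) < C := lt_of_lt_of_le one_pos hC
  set A : Set (List S) := {h : List S | h.head? = some u ∧ 0 < trajProb ν h ∧
        (h.length : ℝ) / (trajProb ν h : ℝ) ≤ C} with hA
  set N := ⌊C⌋₊ with hNdef
  have hN1 : 1 ≤ N := Nat.le_floor (by exact_mod_cast hC)
  -- the per-length weight function
  set f : ℕ → List S → ℝ≥0∞ := fun t h =>
    if h.length = t ∧ h.head? = some u then (trajProb ν h : ℝ≥0∞) else 0 with hf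
  have hfsum : ∀ t : ℕ, 1 ≤ t → ∑' h : List S, f t h = 1 := by
    intro t ht
    obtain ⟨n, rfl⟩ : ∃ n, t = n + 1 := ⟨t - 1, (Nat.succ_pred_eq_of_pos ht).symm⟩
    have e1 : ∑' (x : ↑{h : List S | h.length = n + 1 ∧ h.head? = some u}),
        (trajProb ν x.1 : ℝ≥0∞) = 1 := LevinAux.tsum_trajProb ν hν n u
    rw [← e1, tsum_subtype {h : List S | h.length = n + 1 ∧ h.head? = some u}
      (fun h => (trajProb ν h : ℝ≥0∞))]
    apply tsum_congr
    intro h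
    by_cases hh : h.length = n + 1 ∧ h.head? = some u
    · simp [hf, hh, Set.indicator, Set.mem_setOf_eq]
    · simp [hf, hh, Set.indicator, Set.mem_setOf_eq]
  -- the sets of "fast trajectories of length t"
  set F : ℕ → Set (List S) := fun t => {h | ENNReal.ofReal (t / C) ≤ f t h} with hF
  have hFfin : ∀ t : ℕ, 1 ≤ t → (F t).Finite := by
    intro t ht
    apply ENNReal.finite_const_le_of_tsum_ne_top
    · rw [hfsum t ht]; exact ENNReal.one_ne_top
    · simp only [ne_eq, ENNReal.ofReal_eq_zero, not_le]
      positivity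
  -- A is covered by the F t
  have hsub : ∀ h ∈ A, h.length ∈ Finset.Icc 1 N ∧ h ∈ F h.length := by
    intro h hh
    obtain ⟨hhead, hp, hle⟩ := hh
    have hne : h ≠ [] := by
      intro he; rw [he] at hhead; simp at hhead
    have hlen1 : 1 ≤ h.length := List.length_pos_iff.mpr hne
    have hpR : (0:ℝ) < (trajProb ν h : ℝ) := by exact_mod_cast hp
    have hp1 : (trajProb ν h : ℝ) ≤ 1 := by
      exact_mod_cast LevinAux.trajProb_le_one ν hν h
    have hlC : (h.length : ℝ) ≤ C * (trajProb ν h : ℝ) :=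
      (div_le_iff₀ hpR).mp hle
    have hlenC : (h.length : ℝ) ≤ C := hlC.trans (by nlinarith)
    have hlenN : h.length ≤ N := Nat.le_floor hlenC
    refine ⟨Finset.mem_Icc.mpr ⟨hlen1, hlenN⟩, ?_⟩
    have hdiv : (h.length : ℝ) / C ≤ (trajProb ν h : ℝ) :=
      (div_le_iff₀ hC0).mpr (by linarith [hlC, mul_comm C (trajProb ν h : ℝ)])
    show ENNReal.ofReal ((h.length : ℝ) / C) ≤ f h.length h
    have : f h.length h = (trajProb ν h : ℝ≥0∞) := by
      simp [hf, hhead]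
    rw [this, ← ENNReal.ofReal_coe_nnreal]
    exact ENNReal.ofReal_le_ofReal hdiv
  -- a Finset version of F
  set G : ℕ → Finset (List S) := fun t =>
    if ht : 1 ≤ t then (hFfin t ht).toFinset else ∅ with hG
  -- cardinality bound for each G t
  have hcard : ∀ t : ℕ, 1 ≤ t → ((G t).card : ℝ) ≤ C / t := by
    intro t ht
    have htR : (0:ℝ) < t := by exact_mod_cast ht
    have hGt : G t = (hFfin t ht).toFinset := by simp [hG, ht]
    have h1 : (G t).card • ENNReal.ofReal (t / C) ≤ ∑ h ∈ G t, f t h := by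
      apply Finset.card_nsmul_le_sum
      intro h hh
      rw [hGt, Set.Finite.mem_toFinset] at hh
      exact hh
    have h2 : ∑ h ∈ G t, f t h ≤ 1 := by
      rw [← hfsum t ht]; exact ENNReal.sum_le_tsum _
    have h3 : ((G t).card : ℝ≥0∞) * ENNReal.ofReal (t / C) ≤ 1 := by
      rw [← nsmul_eq_mul]; exact h1.trans h2
    rw [← ENNReal.ofReal_natCast, ← ENNReal.ofReal_mul (by positivity),
      ENNReal.ofReal_le_one] at h3
    have h4 : ((G t).card : ℝ) * t / C ≤ 1 := by
      rw [mul_div_assoc]; exact h3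
    have h5 : ((G t).card : ℝ) * t ≤ C := (div_le_one hC0).mp h4
    rw [le_div_iff₀ htR]
    exact h5
  -- finiteness of A
  have hAfin : A.Finite := by
    apply Set.Finite.subset (Set.Finite.biUnion (Finset.Icc 1 N).finite_toSet
      (fun t ht => hFfin t (Finset.mem_Icc.mp ht).1))
    intro h hh
    obtain ⟨ht, hFt⟩ := hsub h hh
    exact Set.mem_biUnion ht hFt
  refine ⟨hAfin, ?_⟩
  -- cardinality of A
  have hTA : hAfin.toFinset ⊆ (Finset.Icc 1 N).biUnion G := by
    intro h hh
    rw [Set.Finite.mem_toFinset] at hh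
    obtain ⟨ht, hFt⟩ := hsub h hh
    apply Finset.mem_biUnion.mpr
    refine ⟨h.length, ht, ?_⟩
    have h1 : 1 ≤ h.length := (Finset.mem_Icc.mp ht).1
    simp only [hG, dif_pos h1, Set.Finite.mem_toFinset]
    exact hFt
  have hcardA : Nat.card A = hAfin.toFinset.card := by
    rw [Nat.card_coe_set_eq, Set.ncard_eq_toFinset_card A hAfin]
  rw [hcardA]
  have step1 : (hAfin.toFinset.card : ℝ) ≤ ∑ t ∈ Finset.Icc 1 N, ((G t).card : ℝ) := by
    have := (Finset.card_le_card hTA).trans (Finset.card_biUnion_le)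
    exact_mod_cast this
  have step2 : ∑ t ∈ Finset.Icc 1 N, ((G t).card : ℝ) ≤ ∑ t ∈ Finset.Icc 1 N, C / t := by
    apply Finset.sum_le_sum
    intro t ht
    exact hcard t (Finset.mem_Icc.mp ht).1
  have step3 : ∑ t ∈ Finset.Icc 1 N, C / (t:ℝ) = C * (harmonic N : ℝ) := by
    rw [harmonic_eq_sum_Icc]
    push_cast
    rw [Finset.mul_sum]
    apply Finset.sum_congr rfl
    intro t _
    rw [div_eq_mul_inv]
  have step4 : C * (harmonic N : ℝ) ≤ C * (1 + Real.log N) :=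
    mul_le_mul_of_nonneg_left (harmonic_le_one_add_log N) hC0.le
  have hNC : (N : ℝ) ≤ C := Nat.floor_le hC0.le
  have hN0 : (0:ℝ) < N := by exact_mod_cast hN1
  have step5 : Real.log N ≤ Real.log C := Real.log_le_log hN0 hNC
  calc (hAfin.toFinset.card : ℝ) ≤ ∑ t ∈ Finset.Icc 1 N, C / t := step1.trans step2
    _ = C * (harmonic N : ℝ) := step3
    _ ≤ C * (1 + Real.log N) := step4
    _ ≤ C * (1 + Real.log C) := by nlinarith
end

section
/- Let ν be a stochastic dynamical system on a countable type S, let u ∈ S and let F ⊆ S be a set of terminal states. Define the success-by-time curve F_ν(t) = ∑' over trajectories h of length at most t starting at u whose last state lies in F and none of whose earlier states lies in F, of ν(h), and define τ*_ν(F) = inf over integers t ≥ 1 of t / F_ν(t) (taken in [0,∞], with t/0 = ∞). Then the restart baseline improves on every single-path bound: τ*_ν(F) ≤ inf { T(h)/ν(h) : h a trajectory starting at u whose last state lies in F and ν(h) > 0 }. -/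
open scoped ENNReal NNReal
/-- The success-by-time curve `F_ν(t)`: the total probability of trajectories of length at
most `t` starting at `u` whose last state lies in `F` and none of whose earlier states lies
in `F`. -/
noncomputable def successBy {S : Type*} (ν : S → S → NNReal) (u : S) (F : Set S) (t : ℕ) :
    ℝ≥0∞ :=
  ∑' h : {h : List S // h.length ≤ t ∧ h.head? = some u ∧
      (∃ s, h.getLast? = some s ∧ s ∈ F) ∧ ∀ s ∈ h.dropLast, s ∉ F},
    (trajProb ν h.1 : ℝ≥0∞)

/-- The restart baseline `τ*_ν(F) = inf_{t ≥ 1} t / F_ν(t)`, in `[0,∞]` (with `t/0 = ∞`). -/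
noncomputable def restartTime {S : Type*} (ν : S → S → NNReal) (u : S) (F : Set S) : ℝ≥0∞ :=
  ⨅ t ∈ {t : ℕ | 1 ≤ t}, (t : ℝ≥0∞) / successBy ν u F t

lemma list_prod_le_one {l : List NNReal} (h : ∀ x ∈ l, x ≤ 1) : l.prod ≤ 1 := by
  induction l with
  | nil => simp
  | cons a t ih =>
    simp only [List.prod_cons]
    exact mul_le_one' (h a (by simp)) (ih fun x hx => h x (List.mem_cons_of_mem _ hx))

lemma nu_le_one {S : Type*} (ν : S → S → NNReal) (hν : ∀ s : S, ∑' t : S, ν s t = 1) (a b : S) : ν a b ≤ 1 := by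
  have hs : Summable (ν a) := by
    by_contra hc
    simpa [tsum_eq_zero_of_not_summable hc] using hν a
  calc ν a b ≤ ∑' t, ν a t := Summable.le_tsum hs b (fun _ _ => zero_le)
    _ = 1 := hν a

lemma trajProb_le_one {S : Type*} (ν : S → S → NNReal) (hν : ∀ s : S, ∑' t : S, ν s t = 1) (h : List S) : trajProb ν h ≤ 1 := by
  apply list_prod_le_one
  intro x hx
  simp only [List.mem_map] at hx
  obtain ⟨p, -, rfl⟩ := hx
  exact nu_le_one ν hν _ _

lemma trajProb_le_take {S : Type*} (ν : S → S → NNReal) (hν : ∀ s : S, ∑' t : S, ν s t = 1) :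
    ∀ (h : List S) (k : ℕ), trajProb ν h ≤ trajProb ν (h.take k) := by
  intro h
  induction h with
  | nil => intro k; simp
  | cons a t ih =>
    intro k
    match k, t with
    | 0, t => simpa [trajProb] using trajProb_le_one ν hν (a :: t)
    | k+1, [] => simp
    | 1, b :: t' =>
      have h1 : trajProb ν (a :: b :: t') = ν a b * trajProb ν (b :: t') := by
        simp [trajProb]
      have : trajProb ν ((a :: b :: t').take 1) = 1 := by simp [trajProb]
      rw [this, h1]
      exact mul_le_one' (nu_le_one ν hν a b) (trajProb_le_one ν hν _)
    | k+2, b :: t' =>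
      have h1 : trajProb ν (a :: b :: t') = ν a b * trajProb ν (b :: t') := by
        simp [trajProb]
      have h2 : trajProb ν ((a :: b :: t').take (k+2)) =
          ν a b * trajProb ν ((b :: t').take (k+1)) := by
        match k, t' with
        | 0, _ => simp [trajProb]
        | k+1, [] => simp [trajProb]
        | k+1, c :: t'' => simp [trajProb]
      rw [h1, h2]
      exact mul_le_mul_right (ih (k+1)) _

lemma exists_good_prefix {S : Type*} (F : Set S) :
    ∀ (h : List S) (u s : S), h.head? = some u → h.getLast? = some s → s ∈ F →
    ∃ p : List S, p <+: h ∧ p.head? = some u ∧ (∃ s', p.getLast? = some s' ∧ s' ∈ F) ∧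
      ∀ x ∈ p.dropLast, x ∉ F := by
  intro h
  induction h with
  | nil => intro u s hu; simp at hu
  | cons a t ih =>
    intro u s hu hl hsF
    simp only [List.head?_cons, Option.some.injEq] at hu
    subst hu
    by_cases haF : a ∈ F
    · exact ⟨[a], ⟨t, rfl⟩, rfl, ⟨a, rfl, haF⟩, by simp⟩
    · match t with
      | [] =>
        simp only [List.getLast?_singleton, Option.some.injEq] at hl
        exact absurd (hl ▸ hsF) haF
      | b :: t' =>
        have hl' : (b :: t').getLast? = some s := by
          rw [← hl]; simp [List.getLast?_cons_cons]
        obtain ⟨p, ⟨q, hpq⟩, hph, ⟨s', hps', hs'F⟩, hpd⟩ := ih b s rfl hl' hsF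
        have hpne : p ≠ [] := by
          intro he; rw [he] at hph; simp at hph
        refine ⟨a :: p, ⟨q, by rw [List.cons_append, hpq]⟩, rfl, ⟨s', ?_, hs'F⟩, ?_⟩
        · cases p with
          | nil => exact absurd rfl hpne
          | cons c p' => rw [List.getLast?_cons_cons]; exact hps'
        · intro x hx
          rw [List.dropLast_cons_of_ne_nil hpne] at hx
          rcases List.mem_cons.mp hx with rfl | hx'
          · exact haF
          · exact hpd x hx'

/-- **The restart baseline improves on every single-path bound:**
`τ*_ν(F) ≤ inf { T(h)/ν(h) : h a trajectory starting at u ending in F with ν(h) > 0 }`. -/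
theorem restartTime_le_single_path {S : Type*} [Countable S]
    (ν : S → S → NNReal) (hν : ∀ s : S, ∑' t : S, ν s t = 1)
    (u : S) (F : Set S) :
    restartTime ν u F ≤
      ⨅ h ∈ {h : List S | h.head? = some u ∧ (∃ s, h.getLast? = some s ∧ s ∈ F) ∧
          0 < trajProb ν h},
        (h.length : ℝ≥0∞) / (trajProb ν h : ℝ≥0∞) := by
  rw [le_iInf₂_iff]
  rintro h ⟨hhead, ⟨s, hlast, hsF⟩, hpos⟩
  obtain ⟨p, hpre, hph, hpl, hpd⟩ := exists_good_prefix F h u s hhead hlast hsF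
  have hne : h ≠ [] := by intro he; rw [he] at hhead; simp at hhead
  have ht1 : 1 ≤ h.length := List.length_pos_iff.mpr hne
  have hprob : (trajProb ν h : ℝ≥0∞) ≤ trajProb ν p := by
    have := trajProb_le_take ν hν h p.length
    rw [List.prefix_iff_eq_take.mp hpre]
    exact_mod_cast this
  have hsucc : (trajProb ν h : ℝ≥0∞) ≤ successBy ν u F h.length := by
    refine le_trans hprob ?_
    exact ENNReal.le_tsum (⟨p, hpre.length_le, hph, hpl, hpd⟩ :
      {h' : List S // h'.length ≤ h.length ∧ h'.head? = some u ∧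
        (∃ s, h'.getLast? = some s ∧ s ∈ F) ∧ ∀ s ∈ h'.dropLast, s ∉ F})
  calc restartTime ν u F ≤ (h.length : ℝ≥0∞) / successBy ν u F h.length :=
        iInf₂_le h.length ht1
    _ ≤ (h.length : ℝ≥0∞) / (trajProb ν h : ℝ≥0∞) :=
        ENNReal.div_le_div_left hsucc _
end

section
/- Time-weighted sampling: Let H be a countable type, p : H → ℝ≥0 with ∑' h, p(h) = 1, and T : H → ℝ with T(h) ≥ 1 for all h. Set Z = ∑' h, p(h)/T(h) (so 0 < Z ≤ 1) and define the probability mass function q(h) = p(h)/(Z·T(h)). Fix h* ∈ H with p(h*) > 0, let (Xᵢ)_{i∈ℕ} be an i.i.d. sequence with law q on the countable product probability space, and let N be the least index i with Xᵢ = h* (which is almost surely finite). Then the expected total time until h* is first sampled is exactly E[∑_{i=1}^{N} T(Xᵢ)] = T(h*)/p(h*). -/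
open MeasureTheory ProbabilityTheory
open scoped ENNReal NNReal

/-- **Time-weighted sampling.** Let `H` be countable, `p : H → ℝ≥0` a probability mass
function (`∑' h, p h = 1`), and `T : H → ℝ` with `T h ≥ 1`. Set `Z = ∑' h, p h / T h` and
let `q h = p h / (Z · T h)` be the time-weighted distribution. Let `(Xᵢ)` be an i.i.d.
sequence with law `q` on a probability space, fix `h⋆` with `p h⋆ > 0`, and let
`N ω = sInf {i | Xᵢ ω = hstar}` be the first hitting time of `hstar` (almost surely finite).
Then the expected total time until `hstar` is first sampled is
`E[∑_{i=0}^{N} T(Xᵢ)] = T(hstar) / p(hstar)`. -/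
theorem time_weighted_sampling {H : Type*} [Countable H]
    [MeasurableSpace H] [MeasurableSingletonClass H]
    (p : H → NNReal) (hp : ∑' h : H, p h = 1)
    (T : H → ℝ) (hT : ∀ h, 1 ≤ T h)
    (Z : ℝ) (hZ : Z = ∑' h : H, (p h : ℝ) / T h)
    (q : H → ℝ) (hq : ∀ h, q h = (p h : ℝ) / (Z * T h))
    {Ω : Type*} [MeasurableSpace Ω] (P : Measure Ω) [IsProbabilityMeasure P]
    (X : ℕ → Ω → H) (hmeas : ∀ i, Measurable (X i))
    (hindep : iIndepFun X P)
    (hdist : ∀ i h, P {ω | X i ω = h} = ENNReal.ofReal (q h))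
    (hstar : H) (hpos : 0 < p hstar)
    (N : Ω → ℕ) (hN : ∀ ω, N ω = sInf {i : ℕ | X i ω = hstar}) :
    (∫ ω, ∑ i ∈ Finset.range (N ω + 1), T (X i ω) ∂P) = T hstar / (p hstar : ℝ) := by
  -- basic positivity facts
  have hT0 : ∀ h, (0:ℝ) < T h := fun h => lt_of_lt_of_le one_pos (hT h)
  have hTm : Measurable T := measurable_of_countable T
  have hpR : (0:ℝ) < (p hstar : ℝ) := by exact_mod_cast hpos
  -- summability of p
  have hsp : Summable p := by
    by_contra h
    rw [tsum_eq_zero_of_not_summable h] at hp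
    exact one_ne_zero hp.symm
  have hspR : Summable (fun h : H => (p h : ℝ)) := NNReal.summable_coe.mpr hsp
  have hpsumR : ∑' h : H, (p h : ℝ) = 1 := by
    rw [← NNReal.coe_tsum, hp]; norm_num
  have hsumpT : Summable (fun h : H => (p h : ℝ) / T h) := by
    apply Summable.of_nonneg_of_le
      (fun h => div_nonneg (p h).coe_nonneg (hT0 h).le)
      (fun h => by
        rw [div_le_iff₀ (hT0 h)]
        nlinarith [(p h).coe_nonneg, hT h]) hspR
  have hZ0 : 0 < Z := by
    rw [hZ]
    have h1 : (p hstar : ℝ) / T hstar ≤ ∑' h : H, (p h : ℝ) / T h :=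
      hsumpT.le_tsum hstar (fun h _ => div_nonneg (p h).coe_nonneg (hT0 h).le)
    have h2 : (0:ℝ) < (p hstar : ℝ) / T hstar := div_pos hpR (hT0 hstar)
    linarith
  have hq0 : ∀ h, 0 ≤ q h := fun h => by
    rw [hq]; exact div_nonneg (p h).coe_nonneg (mul_nonneg hZ0.le (hT0 h).le)
  set s : ℝ := q hstar with hs_def
  have hs0 : 0 < s := by
    rw [hs_def, hq]
    exact div_pos hpR (mul_pos hZ0 (hT0 hstar))
  -- q is a pmf, so s ≤ 1
  have hqeq : q = fun h => ((p h : ℝ) / T h) / Z := by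
    funext h
    rw [hq, div_div, mul_comm (T h) Z]
  have hqsum : Summable q := by
    rw [hqeq]
    exact hsumpT.div_const Z
  have hqtsum : ∑' h : H, q h = 1 := by
    rw [hqeq, tsum_div_const, ← hZ, div_self (ne_of_gt hZ0)]
  have hs1 : s ≤ 1 := by
    rw [← hqtsum]
    exact hqsum.le_tsum hstar (fun h _ => hq0 h)
  -- key expectation sum: ∑ q h * T h = 1/Z
  have hqT : ∀ h, q h * T h = (p h : ℝ) / Z := by
    intro h
    rw [hq]
    field_simp [ne_of_gt hZ0, ne_of_gt (hT0 h)]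
  have hqTsum : Summable (fun h => q h * T h) := by
    simp only [hqT]
    exact hspR.div_const Z
  have hqTt : ∑' h : H, q h * T h = 1 / Z := by
    simp only [hqT]
    rw [tsum_div_const, hpsumR]
  -- measure of fibers
  have hfib : ∀ i (x : H), P (X i ⁻¹' {x}) = ENNReal.ofReal (q x) := by
    intro i x
    rw [show X i ⁻¹' {x} = {ω | X i ω = x} from rfl, hdist]
  have hfibc : ∀ i, P ((X i ⁻¹' {hstar})ᶜ) = 1 - ENNReal.ofReal s := by
    intro i
    rw [measure_compl ((hmeas i) (measurableSet_singleton _)) (measure_ne_top _ _),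
      hfib, measure_univ]
  set r : ℝ≥0∞ := 1 - ENNReal.ofReal s with hr_def
  have hsle : ENNReal.ofReal s ≤ 1 := by
    rw [← ENNReal.ofReal_one]
    exact ENNReal.ofReal_le_ofReal hs1
  have hr1 : 1 - r = ENNReal.ofReal s := ENNReal.sub_sub_cancel ENNReal.one_ne_top hsle
  have hrlt : r < 1 := by
    rw [hr_def]
    refine ENNReal.sub_lt_self ENNReal.one_ne_top one_ne_zero ?_
    simpa [ENNReal.ofReal_pos] using hs0
  -- the sets C i
  set C : ℕ → Set Ω := fun i => ⋂ j ∈ Finset.range i, (X j ⁻¹' {hstar})ᶜ with hC_def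
  have hCmeas : ∀ i, MeasurableSet (C i) := by
    intro i
    exact MeasurableSet.biInter (Finset.range i).countable_toSet
      (fun j _ => ((hmeas j) (measurableSet_singleton _)).compl)
  have hCP : ∀ i, P (C i) = r ^ i := by
    intro i
    rw [hC_def]
    rw [hindep.meas_biInter (S := Finset.range i)
      (s := fun j => (X j ⁻¹' {hstar})ᶜ)
      (fun j _ => ⟨({hstar} : Set H)ᶜ, (measurableSet_singleton _).compl, rfl⟩)]
    simp [hfibc]
  -- joint measure
  have hCx : ∀ i (x : H), P (C i ∩ X i ⁻¹' {x}) = r ^ i * ENNReal.ofReal (q x) := by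
    intro i x
    classical
    set s' : ℕ → Set Ω := fun j => if j = i then X i ⁻¹' {x} else (X j ⁻¹' {hstar})ᶜ with hs'
    have hmeas' : ∀ j ∈ Finset.range (i + 1),
        MeasurableSet[MeasurableSpace.comap (X j) inferInstance] (s' j) := by
      intro j _
      by_cases hji : j = i
      · subst hji
        simp only [hs', if_pos rfl]
        exact ⟨{x}, measurableSet_singleton x, rfl⟩
      · simp only [hs', if_neg hji]
        exact ⟨({hstar} : Set H)ᶜ, (measurableSet_singleton _).compl, rfl⟩
    have key := hindep.meas_biInter (S := Finset.range (i + 1)) hmeas'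
    have hset : ⋂ j ∈ Finset.range (i + 1), s' j = C i ∩ X i ⁻¹' {x} := by
      rw [Finset.range_add_one, Finset.set_biInter_insert]
      rw [Set.inter_comm]
      congr 1
      · apply Set.iInter₂_congr
        intro j hj
        rw [hs']
        simp only
        rw [if_neg (Nat.ne_of_lt (Finset.mem_range.mp hj))]
      · simp only [hs', if_pos rfl]
    have hprod : ∏ j ∈ Finset.range (i + 1), P (s' j) = r ^ i * ENNReal.ofReal (q x) := by
      rw [Finset.range_add_one, Finset.prod_insert Finset.notMem_range_self]
      rw [mul_comm]
      congr 1
      · have hconst : ∀ j ∈ Finset.range i, P (s' j) = r := by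
          intro j hj
          rw [hs']
          simp only
          rw [if_neg (Nat.ne_of_lt (Finset.mem_range.mp hj))]
          exact hfibc j
        rw [Finset.prod_congr rfl hconst, Finset.prod_const, Finset.card_range]
      · simp only [hs', if_pos rfl]
        exact hfib i x
    rw [← hset, key, hprod]
  -- expectation constant
  set M : ℝ≥0∞ := ∑' x : H, ENNReal.ofReal (T x) * ENNReal.ofReal (q x) with hM_def
  have hM : M = ENNReal.ofReal (1 / Z) := by
    rw [hM_def, ← hqTt]
    rw [ENNReal.ofReal_tsum_of_nonneg (fun h => mul_nonneg (hq0 h) (hT0 h).le) hqTsum]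
    congr 1
    funext x
    rw [← ENNReal.ofReal_mul (hT0 x).le, mul_comm]
  -- per-index integral
  have hstep : ∀ i, ∫⁻ ω in C i, ENNReal.ofReal (T (X i ω)) ∂P = r ^ i * M := by
    intro i
    have hrepr : ∀ ω : Ω, ENNReal.ofReal (T (X i ω))
        = ∑' x : H, (X i ⁻¹' {x}).indicator (fun _ => ENNReal.ofReal (T x)) ω := by
      intro ω
      have h1 : ∀ b : H, b ≠ X i ω →
          (X i ⁻¹' {b}).indicator (fun _ => ENNReal.ofReal (T b)) ω = 0 := by
        intro b hb
        exact Set.indicator_of_notMem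
          (fun hmem => hb (Set.mem_singleton_iff.mp hmem).symm)
          (fun _ => ENNReal.ofReal (T b))
      rw [tsum_eq_single
        (f := fun x : H => (X i ⁻¹' {x}).indicator (fun _ => ENNReal.ofReal (T x)) ω)
        (X i ω) h1]
      exact (Set.indicator_of_mem (show ω ∈ X i ⁻¹' {X i ω} from rfl)
        (fun _ => ENNReal.ofReal (T (X i ω)))).symm
    calc ∫⁻ ω in C i, ENNReal.ofReal (T (X i ω)) ∂P
        = ∫⁻ ω in C i, ∑' x : H, (X i ⁻¹' {x}).indicator (fun _ => ENNReal.ofReal (T x)) ω ∂P :=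
          lintegral_congr hrepr
      _ = ∑' x : H, ∫⁻ ω in C i,
            (X i ⁻¹' {x}).indicator (fun _ => ENNReal.ofReal (T x)) ω ∂P :=
          lintegral_tsum (fun x => (measurable_const.indicator
            ((hmeas i) (measurableSet_singleton x))).aemeasurable)
      _ = ∑' x : H, ENNReal.ofReal (T x) * P (C i ∩ X i ⁻¹' {x}) := by
          congr 1
          funext x
          rw [lintegral_indicator_const ((hmeas i) (measurableSet_singleton x)),
            Measure.restrict_apply ((hmeas i) (measurableSet_singleton x)), Set.inter_comm]
      _ = ∑' x : H, r ^ i * (ENNReal.ofReal (T x) * ENNReal.ofReal (q x)) := by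
          congr 1
          funext x
          rw [hCx i x]
          ring
      _ = r ^ i * M := ENNReal.tsum_mul_left
  -- the measurable surrogate g
  set g : Ω → ℝ≥0∞ := fun ω =>
    ∑' i, (C i).indicator (fun ω => ENNReal.ofReal (T (X i ω))) ω with hg_def
  have hterm : ∀ i : ℕ,
      Measurable (fun ω => (C i).indicator (fun ω => ENNReal.ofReal (T (X i ω))) ω) := by
    intro i
    exact Measurable.indicator (ENNReal.measurable_ofReal.comp (hTm.comp (hmeas i))) (hCmeas i)
  have hg_meas : Measurable g := Measurable.ennreal_tsum hterm
  have hgint : ∫⁻ ω, g ω ∂P = ENNReal.ofReal (T hstar / (p hstar : ℝ)) := by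
    rw [hg_def]
    rw [lintegral_tsum (fun i => (hterm i).aemeasurable)]
    have : ∀ i : ℕ, ∫⁻ ω, (C i).indicator (fun ω => ENNReal.ofReal (T (X i ω))) ω ∂P
        = r ^ i * M := by
      intro i
      rw [lintegral_indicator (hCmeas i)]
      exact hstep i
    simp only [this]
    rw [ENNReal.tsum_mul_right, ENNReal.tsum_geometric, hr1, hM]
    rw [← ENNReal.ofReal_inv_of_pos hs0, ← ENNReal.ofReal_mul (by positivity)]
    congr 1
    rw [hs_def, hq]
    field_simp
  -- bad event is null
  have hbad : P (⋂ i, (X i ⁻¹' {hstar})ᶜ) = 0 := by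
    have hle : ∀ n : ℕ, P (⋂ i, (X i ⁻¹' {hstar})ᶜ) ≤ r ^ n := by
      intro n
      rw [← hCP n]
      apply measure_mono
      intro ω hω
      simp only [hC_def, Set.mem_iInter] at hω ⊢
      exact fun j _ => hω j
    have htend : Filter.Tendsto (fun n : ℕ => r ^ n) Filter.atTop (nhds 0) :=
      ENNReal.tendsto_pow_atTop_nhds_zero_of_lt_one hrlt
    have := ge_of_tendsto' htend hle
    exact le_antisymm this zero_le
  -- pointwise identity off the bad event
  have hae : ∀ ω, ω ∉ (⋂ i, (X i ⁻¹' {hstar})ᶜ) →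
      ENNReal.ofReal (∑ i ∈ Finset.range (N ω + 1), T (X i ω)) = g ω := by
    intro ω hω
    simp only [Set.mem_iInter, Set.mem_compl_iff, Set.mem_preimage,
      Set.mem_singleton_iff, not_forall, not_not] at hω
    have hne : Set.Nonempty {i : ℕ | X i ω = hstar} := by
      obtain ⟨i, hi⟩ := hω
      exact ⟨i, hi⟩
    have hNmem : X (N ω) ω = hstar := by
      have := Nat.sInf_mem hne
      rw [← hN ω] at this
      exact this
    have hiC : ∀ i : ℕ, ω ∈ C i ↔ i ≤ N ω := by
      intro i
      simp only [hC_def, Set.mem_iInter, Finset.mem_range, Set.mem_compl_iff,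
        Set.mem_preimage, Set.mem_singleton_iff]
      constructor
      · intro h
        by_contra hlt
        push_neg at hlt
        exact h (N ω) hlt hNmem
      · intro h j hj hmem
        have hjlt : j < sInf {i : ℕ | X i ω = hstar} := lt_of_lt_of_le hj (by rw [← hN]; exact h)
        exact Nat.notMem_of_lt_sInf hjlt hmem
    have hg1 : g ω = ∑ i ∈ Finset.range (N ω + 1),
        (C i).indicator (fun ω => ENNReal.ofReal (T (X i ω))) ω :=
      tsum_eq_sum (fun i hi => Set.indicator_of_notMem (by
        rw [hiC i]
        simpa using hi) _)
    rw [ENNReal.ofReal_sum_of_nonneg (fun i _ => (hT0 (X i ω)).le), hg1]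
    exact Finset.sum_congr rfl (fun i hi => (Set.indicator_of_mem
      ((hiC i).mpr (Nat.lt_succ_iff.mp (Finset.mem_range.mp hi)))
      (fun ω => ENNReal.ofReal (T (X i ω)))).symm)
  -- lintegral of ofReal f
  have hlint : ∫⁻ ω, ENNReal.ofReal (∑ i ∈ Finset.range (N ω + 1), T (X i ω)) ∂P
      = ENNReal.ofReal (T hstar / (p hstar : ℝ)) := by
    rw [← hgint]
    apply lintegral_congr_ae
    have hmeasbad : MeasurableSet (⋂ i, (X i ⁻¹' {hstar})ᶜ) :=
      MeasurableSet.iInter (fun i => ((hmeas i) (measurableSet_singleton _)).compl)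
    filter_upwards [MeasureTheory.measure_eq_zero_iff_ae_notMem.mp hbad] with ω hω
    exact hae ω hω
  -- measurability of N and f
  have hNmeas : Measurable N := by
    apply measurable_to_countable'
    intro n
    match n with
    | 0 =>
      have : N ⁻¹' {0} = (X 0 ⁻¹' {hstar}) ∪ ⋂ j, (X j ⁻¹' {hstar})ᶜ := by
        ext ω
        simp only [Set.mem_preimage, Set.mem_singleton_iff, Set.mem_union, Set.mem_iInter,
          Set.mem_compl_iff, hN ω]
        rw [Nat.sInf_eq_zero]
        constructor
        · rintro (h0 | hemp)
          · exact Or.inl h0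
          · exact Or.inr (fun j hj => (Set.eq_empty_iff_forall_notMem.mp hemp j) hj)
        · rintro (h0 | hall)
          · exact Or.inl h0
          · exact Or.inr (Set.eq_empty_iff_forall_notMem.mpr (fun j hj => hall j hj))
      rw [this]
      exact ((hmeas 0) (measurableSet_singleton _)).union
        (MeasurableSet.iInter (fun j => ((hmeas j) (measurableSet_singleton _)).compl))
    | (m + 1) =>
      have : N ⁻¹' {m + 1} = (X (m + 1) ⁻¹' {hstar}) ∩
          ⋂ j ∈ Finset.range (m + 1), (X j ⁻¹' {hstar})ᶜ := by
        ext ω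
        simp only [Set.mem_preimage, Set.mem_singleton_iff, Set.mem_inter_iff, Set.mem_iInter,
          Finset.mem_range, Set.mem_compl_iff, hN ω]
        constructor
        · intro h
          have hne : Set.Nonempty {i : ℕ | X i ω = hstar} := by
            by_contra hc
            rw [Set.not_nonempty_iff_eq_empty.mp hc, Nat.sInf_empty] at h
            exact Nat.succ_ne_zero m h.symm
          have hmem := Nat.sInf_mem hne
          rw [h] at hmem
          refine ⟨hmem, fun j hj hjm => ?_⟩
          exact Nat.notMem_of_lt_sInf (h ▸ hj) hjm
        · rintro ⟨hm, hlt⟩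
          have hmem : (m + 1) ∈ {i : ℕ | X i ω = hstar} := hm
          have h1 : sInf {i : ℕ | X i ω = hstar} ≤ m + 1 := Nat.sInf_le hmem
          have h2 : m + 1 ≤ sInf {i : ℕ | X i ω = hstar} := by
            by_contra hc
            push_neg at hc
            exact hlt _ hc (Nat.sInf_mem ⟨m + 1, hmem⟩)
          omega
      rw [this]
      exact ((hmeas (m + 1)) (measurableSet_singleton _)).inter
        (MeasurableSet.biInter (Finset.range (m + 1)).countable_toSet
          (fun j _ => ((hmeas j) (measurableSet_singleton _)).compl))
  have hfmeas : Measurable (fun ω => ∑ i ∈ Finset.range (N ω + 1), T (X i ω)) := by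
    have hΦ : Measurable (fun pr : Ω × ℕ => ∑ i ∈ Finset.range (pr.2 + 1), T (X i pr.1)) := by
      apply measurable_from_prod_countable_left
      intro n
      exact Finset.measurable_sum (Finset.range (n + 1)) (fun i _ => hTm.comp (hmeas i))
    exact hΦ.comp (measurable_id.prodMk hNmeas)
  -- conclude
  rw [integral_eq_lintegral_of_nonneg_ae
    (Filter.Eventually.of_forall (fun ω =>
      Finset.sum_nonneg (fun i _ => (hT0 (X i ω)).le)))
    hfmeas.aestronglyMeasurable]
  rw [hlint, ENNReal.toReal_ofReal (div_nonneg (hT0 hstar).le hpR.le)]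
end

section
/- Santa Fe / Zipf unique-facts asymptotic: Let β ∈ (0,1), let c = ( ∑'_{k≥1} (k:ℝ)^(−1/β) )⁻¹ (so that p_k = c·k^(−1/β) defines a probability distribution on the positive integers with every p_k ≤ 1). Then the expected number of unique facts U(n) = ∑'_{k≥1} (1 − (1 − p_k)^n) satisfies lim_{n→∞} U(n)/n^β = c^β · Γ(1 − β), where Γ is the real Gamma function. In particular U(n) grows like a constant times n^β, which yields the generalized Hilberg scaling of the Santa Fe process. -/
open Filter

open MeasureTheory Set Real Topology

namespace SantaFeAux

/-- Continuous version of the unique-facts summand. -/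
noncomputable def g (β c : ℝ) (n : ℕ) (x : ℝ) : ℝ :=
  1 - (max 0 (1 - c * x ^ (-1 / β))) ^ n

variable {β c : ℝ} {n : ℕ} {x : ℝ}

lemma g_nonneg (hc : 0 ≤ c) (hx : 0 ≤ x) : 0 ≤ g β c n x := by
  have h1 : max 0 (1 - c * x ^ (-1 / β)) ≤ 1 := by
    have : 0 ≤ c * x ^ (-1 / β) := mul_nonneg hc (Real.rpow_nonneg hx _)
    apply max_le zero_le_one (by linarith)
  have h2 := pow_le_one₀ (le_max_left (0:ℝ) _) h1 (n := n)
  unfold g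
  linarith

lemma g_le_one : g β c n x ≤ 1 := by
  have := pow_nonneg (le_max_left (0:ℝ) (1 - c * x ^ (-1 / β))) n
  unfold g; linarith

lemma g_le_lin (hc : 0 ≤ c) (hx : 0 ≤ x) : g β c n x ≤ n * (c * x ^ (-1 / β)) := by
  set u : ℝ := c * x ^ (-1 / β) with hu
  have hu0 : 0 ≤ u := mul_nonneg hc (Real.rpow_nonneg hx _)
  rcases le_or_gt u 1 with h | h
  · have hmax : max 0 (1 - u) = 1 - u := max_eq_right (by linarith)
    have hber : 1 + n * (-u) ≤ (1 + (-u)) ^ n := one_add_mul_le_pow (by linarith) n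
    simp only [g, ← hu, hmax]
    have : (1 - u) ^ n = (1 + (-u)) ^ n := by ring_nf
    rw [this]
    linarith
  · have hmax : max 0 (1 - u) = 0 := max_eq_left (by linarith)
    simp only [g, ← hu, hmax]
    rcases Nat.eq_zero_or_pos n with rfl | hn
    · simp
    · have : (0:ℝ) ^ n = 0 := zero_pow (by omega)
      rw [this]
      have : (1:ℝ) ≤ n := by exact_mod_cast hn
      nlinarith

lemma g_antitoneOn (hc : 0 ≤ c) (hβ : 0 < β) : AntitoneOn (g β c n) (Ioi 0) := by
  intro a ha b hb hab
  have hβ' : -1 / β ≤ 0 := by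
    have : 0 < 1 / β := by positivity
    rw [neg_div]
    linarith
  have h1 : b ^ (-1 / β) ≤ a ^ (-1 / β) :=
    Real.rpow_le_rpow_of_nonpos ha hab hβ'
  have h2 : max 0 (1 - c * a ^ (-1 / β)) ≤ max 0 (1 - c * b ^ (-1 / β)) := by
    apply max_le_max le_rfl
    nlinarith
  have := pow_le_pow_left₀ (le_max_left _ _) h2 n
  simp only [g]
  linarith


lemma g_continuousOn (hβ : 0 < β) : ContinuousOn (g β c n) (Ioi 0) := by
  have h1 : ContinuousOn (fun x : ℝ => x ^ (-1 / β)) (Ioi 0) := fun x hx =>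
    (Real.continuousAt_rpow_const x _ (Or.inl (ne_of_gt hx))).continuousWithinAt
  unfold g
  exact continuousOn_const.sub
    (((continuousOn_const.sup (continuousOn_const.sub (continuousOn_const.mul h1)))).pow n)

lemma integrableOn_min_bound (hβ0 : 0 < β) (hβ1 : β < 1) (hc : 0 ≤ c) :
    IntegrableOn (fun x : ℝ => min 1 (c * x ^ (-1 / β))) (Ioi 0) := by
  have hexp : -1 / β < -1 := by
    rw [neg_div]
    have h1 : 1 < 1 / β := by
      rw [lt_div_iff₀ hβ0]; linarith
    linarith
  have hcont : ContinuousOn (fun x : ℝ => min 1 (c * x ^ (-1 / β))) (Ioi 0) := by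
    refine continuousOn_const.inf (continuousOn_const.mul ?_)
    exact fun x hx => (Real.continuousAt_rpow_const x _ (Or.inl (ne_of_gt hx))).continuousWithinAt
  have hsplit : Ioc (0:ℝ) 1 ∪ Ioi (1:ℝ) = Ioi 0 := Ioc_union_Ioi_eq_Ioi zero_le_one
  rw [← hsplit]
  apply IntegrableOn.union
  · -- bounded by 1 on a finite-measure set
    apply Integrable.mono' (g := fun _ => (1:ℝ))
    · exact integrableOn_const (by simp) (by simp)
    · exact (hcont.mono (Ioc_subset_Ioi_self)).aestronglyMeasurable measurableSet_Ioc
    · filter_upwards [ae_restrict_mem measurableSet_Ioc] with x hx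
      have h0 : 0 ≤ min 1 (c * x ^ (-1 / β)) :=
        le_min zero_le_one (mul_nonneg hc (Real.rpow_nonneg hx.1.le _))
      rw [Real.norm_eq_abs, abs_of_nonneg h0]
      exact min_le_left _ _
  · apply Integrable.mono' (g := fun x => c * x ^ (-1 / β))
    · exact (integrableOn_Ioi_rpow_of_lt hexp zero_lt_one).const_mul c
    · exact (hcont.mono (Ioi_subset_Ioi zero_le_one)).aestronglyMeasurable measurableSet_Ioi
    · filter_upwards [ae_restrict_mem measurableSet_Ioi] with x hx
      have hx0 : (0:ℝ) < x := lt_trans zero_lt_one hx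
      have h0 : 0 ≤ min 1 (c * x ^ (-1 / β)) :=
        le_min zero_le_one (mul_nonneg hc (Real.rpow_nonneg hx0.le _))
      rw [Real.norm_eq_abs, abs_of_nonneg h0]
      exact min_le_right _ _

lemma g_le_min (hc : 0 ≤ c) (hx : 0 ≤ x) :
    g β c n x ≤ min 1 ((n * c) * x ^ (-1 / β)) := by
  refine le_min g_le_one ?_
  have := g_le_lin (β := β) (n := n) hc hx
  calc g β c n x ≤ n * (c * x ^ (-1 / β)) := this
    _ = (n * c) * x ^ (-1 / β) := by ring

lemma integrableOn_g (hβ0 : 0 < β) (hβ1 : β < 1) (hc : 0 ≤ c) :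
    IntegrableOn (g β c n) (Ioi 0) := by
  apply Integrable.mono' (g := fun x => min 1 ((n * c) * x ^ (-1 / β)))
  · exact integrableOn_min_bound hβ0 hβ1 (by positivity)
  · exact (g_continuousOn hβ0).aestronglyMeasurable measurableSet_Ioi
  · filter_upwards [ae_restrict_mem measurableSet_Ioi] with x hx
    rw [Real.norm_eq_abs, abs_of_nonneg (g_nonneg hc (le_of_lt hx))]
    exact g_le_min hc (le_of_lt hx)
lemma hexp_lt (hβ0 : 0 < β) (hβ1 : β < 1) : -1 / β < -1 := by
  rw [neg_div]
  have h1 : 1 < 1 / β := by rw [lt_div_iff₀ hβ0]; linarith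
  linarith

lemma summable_g (hβ0 : 0 < β) (hβ1 : β < 1) (hc : 0 ≤ c) :
    Summable (fun k : ℕ+ => g β c n (k : ℕ)) := by
  have hs : Summable (fun m : ℕ => (m : ℝ) ^ (-1 / β)) :=
    Real.summable_nat_rpow.mpr (hexp_lt hβ0 hβ1)
  have hs' : Summable (fun k : ℕ+ => ((k : ℕ) : ℝ) ^ (-1 / β)) := hs.subtype _
  apply Summable.of_nonneg_of_le
    (fun k => g_nonneg hc (by positivity))
    (fun k => ?_) (hs'.mul_left ((n : ℝ) * c))
  calc g β c n (k : ℕ) ≤ (n : ℝ) * (c * ((k:ℕ):ℝ) ^ (-1 / β)) := g_le_lin hc (by positivity)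
    _ = (n : ℝ) * c * ((k:ℕ):ℝ) ^ (-1 / β) := by ring

lemma tsum_pnat_g : (∑' k : ℕ+, g β c n (k : ℕ)) = ∑' m : ℕ, g β c n (m + 1 : ℕ) := by
  rw [← Equiv.pnatEquivNat.symm.tsum_eq (fun k : ℕ+ => g β c n (k : ℕ))]
  rfl
lemma tsum_g_le (hβ0 : 0 < β) (hβ1 : β < 1) (hc : 0 ≤ c) :
    (∑' k : ℕ+, g β c n (k : ℕ)) ≤ 1 + ∫ x in Ioi (0:ℝ), g β c n x := by
  have hint := integrableOn_g (n := n) (c := c) hβ0 hβ1 hc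
  have hInonneg : 0 ≤ ∫ x in Ioi (0:ℝ), g β c n x :=
    setIntegral_nonneg measurableSet_Ioi (fun x hx => g_nonneg hc (le_of_lt hx))
  rw [tsum_pnat_g]
  apply Real.tsum_le_of_sum_range_le (fun m => g_nonneg hc (by positivity))
  intro N
  rcases N with _ | M
  · simp; linarith
  · rw [Finset.sum_range_succ' (fun m => g β c n ((m + 1 : ℕ) : ℝ)) M]
    have h1 : g β c n ((0 + 1 : ℕ) : ℝ) ≤ 1 := g_le_one
    have hanti : AntitoneOn (g β c n) (Icc (1:ℝ) (1 + (M:ℕ))) :=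
      (g_antitoneOn hc hβ0).mono (fun x hx => lt_of_lt_of_le zero_lt_one hx.1)
    have hsum := hanti.sum_le_integral
    have hterm : ∀ i ∈ Finset.range M,
        g β c n (((i + 1) + 1 : ℕ) : ℝ) = g β c n ((1:ℝ) + ((i + 1 : ℕ) : ℝ)) := by
      intro i _
      congr 1
      push_cast
      ring
    rw [Finset.sum_congr rfl hterm]
    have hI : (∫ x in (1:ℝ)..(1 + (M:ℕ)), g β c n x) ≤ ∫ x in Ioi (0:ℝ), g β c n x := by
      rw [intervalIntegral.integral_of_le (le_add_of_nonneg_right (Nat.cast_nonneg _))]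
      apply setIntegral_mono_set hint
      · filter_upwards [ae_restrict_mem measurableSet_Ioi] with x hx
        exact g_nonneg hc (le_of_lt hx)
      · apply HasSubset.Subset.eventuallyLE
        intro x hx
        exact lt_trans zero_lt_one hx.1
    linarith [hsum]

lemma integral_g_le_tsum (hβ0 : 0 < β) (hβ1 : β < 1) (hc : 0 ≤ c) :
    (∫ x in Ioi (0:ℝ), g β c n x) ≤ 1 + ∑' k : ℕ+, g β c n (k : ℕ) := by
  have hint := integrableOn_g (n := n) (c := c) hβ0 hβ1 hc
  have hii : ∀ a b : ℝ, 0 ≤ a → a ≤ b → IntervalIntegrable (g β c n) volume a b := by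
    intro a b ha hab
    rw [intervalIntegrable_iff_integrableOn_Ioc_of_le hab]
    exact hint.mono_set (fun x hx => lt_of_le_of_lt ha hx.1)
  have hlim : Tendsto (fun N : ℕ => ∫ x in (0:ℝ)..(1 + (N:ℕ) : ℝ), g β c n x) atTop
      (𝓝 (∫ x in Ioi (0:ℝ), g β c n x)) := by
    apply intervalIntegral_tendsto_integral_Ioi 0 hint
    apply tendsto_atTop_add_const_left
    exact tendsto_natCast_atTop_atTop
  apply le_of_tendsto hlim
  filter_upwards with N
  have hsplit : (∫ x in (0:ℝ)..(1:ℝ), g β c n x) + (∫ x in (1:ℝ)..(1 + (N:ℕ) : ℝ), g β c n x)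
      = ∫ x in (0:ℝ)..(1 + (N:ℕ) : ℝ), g β c n x :=
    intervalIntegral.integral_add_adjacent_intervals (hii 0 1 le_rfl zero_le_one)
      (hii 1 _ zero_le_one (le_add_of_nonneg_right (Nat.cast_nonneg _)))
  have h01 : (∫ x in (0:ℝ)..(1:ℝ), g β c n x) ≤ 1 := by
    have := intervalIntegral.integral_mono_on (f := g β c n) (g := fun _ => (1:ℝ))
      (μ := volume) zero_le_one (hii 0 1 le_rfl zero_le_one) intervalIntegrable_const
      (fun x _ => g_le_one)
    simpa using this
  have hanti : AntitoneOn (g β c n) (Icc (1:ℝ) (1 + (N:ℕ))) :=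
    (g_antitoneOn hc hβ0).mono (fun x hx => lt_of_lt_of_le zero_lt_one hx.1)
  have hIS := hanti.integral_le_sum
  have hsummable : Summable (fun m : ℕ => g β c n ((m + 1 : ℕ) : ℝ)) := by
    have := (Equiv.pnatEquivNat.symm.summable_iff
      (f := fun k : ℕ+ => g β c n (k : ℕ))).mpr (summable_g hβ0 hβ1 hc)
    exact this
  have hST : (∑ i ∈ Finset.range N, g β c n ((1:ℝ) + (i:ℕ)))
      ≤ ∑' m : ℕ, g β c n ((m + 1 : ℕ) : ℝ) := by
    have hterm : ∀ i ∈ Finset.range N,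
        g β c n ((1:ℝ) + (i:ℕ)) = g β c n ((i + 1 : ℕ) : ℝ) := by
      intro i _
      congr 1
      push_cast
      ring
    rw [Finset.sum_congr rfl hterm]
    exact Summable.sum_le_tsum _ (fun m _ => g_nonneg hc (by positivity)) hsummable
  rw [tsum_pnat_g]
  linarith [hIS, hST, hsplit]
lemma integral_g_scale (hβ0 : 0 < β) {n : ℕ} (hn : 1 ≤ n) :
    (∫ x in Ioi (0:ℝ), g β c n x) = (n:ℝ) ^ β * ∫ y in Ioi (0:ℝ), g β (c / n) n y := by
  have hn0 : (0:ℝ) < (n:ℝ) := by exact_mod_cast hn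
  have hb : (0:ℝ) < (n:ℝ) ^ β := Real.rpow_pos_of_pos hn0 β
  have key := integral_comp_mul_left_Ioi (g β c n) 0 hb
  rw [mul_zero] at key
  have hcongr : (∫ x in Ioi (0:ℝ), g β c n ((n:ℝ) ^ β * x))
      = ∫ y in Ioi (0:ℝ), g β (c / n) n y := by
    apply setIntegral_congr_fun measurableSet_Ioi
    intro x hx
    simp only [g]
    have h1 : ((n:ℝ) ^ β * x) ^ (-1 / β) = ((n:ℝ) ^ β) ^ (-1 / β) * x ^ (-1 / β) :=
      Real.mul_rpow hb.le (le_of_lt hx)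
    have h2 : ((n:ℝ) ^ β) ^ (-1 / β) = ((n:ℝ))⁻¹ := by
      rw [← Real.rpow_mul hn0.le]
      have : β * (-1 / β) = -1 := by field_simp
      rw [this, Real.rpow_neg_one]
    have h3 : c * (((n:ℝ))⁻¹ * x ^ (-1 / β)) = (c / n) * x ^ (-1 / β) := by
      field_simp
    rw [h1, h2, h3]
  rw [hcongr] at key
  rw [key, smul_eq_mul, ← mul_assoc, mul_inv_cancel₀ (ne_of_gt hb), one_mul]

lemma tendsto_J (hβ0 : 0 < β) (hβ1 : β < 1) (hc : 0 < c) :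
    Tendsto (fun n : ℕ => ∫ y in Ioi (0:ℝ), g β (c / n) n y) atTop
      (𝓝 (∫ y in Ioi (0:ℝ), (1 - Real.exp (-(c * y ^ (-1 / β)))))) := by
  apply MeasureTheory.tendsto_integral_of_dominated_convergence
    (bound := fun y => min 1 (c * y ^ (-1 / β)))
  · intro n
    exact (g_continuousOn hβ0).aestronglyMeasurable measurableSet_Ioi
  · exact integrableOn_min_bound hβ0 hβ1 hc.le
  · intro n
    filter_upwards [ae_restrict_mem measurableSet_Ioi] with y hy
    have hcn : 0 ≤ c / n := by positivity
    rw [Real.norm_eq_abs, abs_of_nonneg (g_nonneg hcn (le_of_lt hy))]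
    refine le_min g_le_one ?_
    rcases Nat.eq_zero_or_pos n with rfl | hn
    · have h0 : g β (c / ((0:ℕ):ℝ)) 0 y = 0 := by simp [g]
      rw [h0]
      exact mul_nonneg hc.le (Real.rpow_nonneg (le_of_lt hy) _)
    · calc g β (c / n) n y ≤ (n:ℝ) * ((c / n) * y ^ (-1 / β)) :=
          g_le_lin hcn (le_of_lt hy)
        _ = c * y ^ (-1 / β) := by
          have hn0 : ((n:ℝ)) ≠ 0 := by positivity
          field_simp
  · filter_upwards [ae_restrict_mem measurableSet_Ioi] with y hy
    set t : ℝ := c * y ^ (-1 / β) with ht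
    have ht0 : 0 < t := mul_pos hc (Real.rpow_pos_of_pos hy _)
    have hbase := Real.tendsto_one_add_div_pow_exp (-t)
    have hmain : Tendsto (fun n : ℕ => 1 - (1 + (-t) / (n:ℝ)) ^ n) atTop
        (𝓝 (1 - Real.exp (-t))) := tendsto_const_nhds.sub hbase
    apply hmain.congr'
    filter_upwards [eventually_ge_atTop (⌈t⌉₊ + 1)] with n hn
    have hn1 : 1 ≤ n := le_trans (Nat.le_add_left 1 _) hn
    have hn0 : (0:ℝ) < (n:ℝ) := by exact_mod_cast hn1
    have htn : t ≤ (n:ℝ) := by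
      calc t ≤ (⌈t⌉₊ : ℝ) := Nat.le_ceil t
        _ ≤ (n:ℝ) := by exact_mod_cast le_trans (Nat.le_succ _) hn
    have hdiv : (c / n) * y ^ (-1 / β) = t / n := by
      rw [ht]; ring
    have hmax : max 0 (1 - (c / n) * y ^ (-1 / β)) = 1 + (-t) / (n:ℝ) := by
      rw [hdiv]
      rw [max_eq_right]
      · ring
      · have : t / (n:ℝ) ≤ 1 := (div_le_one hn0).mpr htn
        linarith
    unfold g
    rw [hmax]
lemma one_sub_exp_neg_le (x : ℝ) : 1 - Real.exp (-x) ≤ x := by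
  have := Real.add_one_le_exp (-x)
  linarith

lemma one_sub_exp_neg_nonneg {x : ℝ} (hx : 0 ≤ x) : 0 ≤ 1 - Real.exp (-x) := by
  have : Real.exp (-x) ≤ Real.exp 0 := Real.exp_le_exp.mpr (by linarith)
  simp only [Real.exp_zero] at this
  linarith

lemma ibp_integral (hβ0 : 0 < β) (hβ1 : β < 1) :
    ∫ x in Ioi (0:ℝ), (1 - Real.exp (-x)) * (β * x ^ (-β - 1))
      = Real.Gamma (1 - β) := by
  have h1β : (0:ℝ) < 1 - β := by linarith
  set u : ℝ → ℝ := fun x => 1 - Real.exp (-x) with hu_def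
  set v : ℝ → ℝ := fun x => -(x ^ (-β)) with hv_def
  have hu : ∀ x ∈ Ioi (0:ℝ), HasDerivAt u (Real.exp (-x)) x := by
    intro x _
    have h := ((Real.hasDerivAt_exp (-x)).comp x (hasDerivAt_neg x)).const_sub 1
    simpa using h
  have hv : ∀ x ∈ Ioi (0:ℝ), HasDerivAt v (β * x ^ (-β - 1)) x := by
    intro x hx
    have h : HasDerivAt (fun y : ℝ => -(y ^ (-β))) (-(-β * x ^ (-β - 1))) x :=
      (Real.hasDerivAt_rpow_const (x := x) (p := -β) (Or.inl (ne_of_gt hx))).neg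
    convert h using 1
    ring
  have hu'v : IntegrableOn (fun x => Real.exp (-x) * v x) (Ioi (0:ℝ)) := by
    have h := (Real.GammaIntegral_convergent h1β).neg
    apply IntegrableOn.congr_fun h _ measurableSet_Ioi
    intro x hx
    have he : (1:ℝ) - β - 1 = -β := by ring
    simp only [hv_def, Pi.neg_apply, he]
    ring
  have huv' : IntegrableOn (fun x => u x * (β * x ^ (-β - 1))) (Ioi (0:ℝ)) := by
    have hsplit : Ioc (0:ℝ) 1 ∪ Ioi (1:ℝ) = Ioi 0 := Ioc_union_Ioi_eq_Ioi zero_le_one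
    have hcont : ContinuousOn (fun x => u x * (β * x ^ (-β - 1))) (Ioi (0:ℝ)) := by
      apply ContinuousOn.mul
      · exact (continuousOn_const.sub ((Real.continuous_exp.comp continuous_neg).continuousOn))
      · exact continuousOn_const.mul (fun x hx =>
          (Real.continuousAt_rpow_const x _ (Or.inl (ne_of_gt hx))).continuousWithinAt)
    rw [← hsplit]
    apply IntegrableOn.union
    · apply Integrable.mono' (g := fun x => β * x ^ (-β))
      · have h := intervalIntegral.intervalIntegrable_rpow' (a := 0) (b := 1) (r := -β) (by linarith)
        rw [intervalIntegrable_iff_integrableOn_Ioc_of_le zero_le_one] at h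
        exact h.const_mul β
      · exact (hcont.mono Ioc_subset_Ioi_self).aestronglyMeasurable measurableSet_Ioc
      · filter_upwards [ae_restrict_mem measurableSet_Ioc] with x hx
        have hx0 : (0:ℝ) < x := hx.1
        have h1 : 0 ≤ u x := one_sub_exp_neg_nonneg hx0.le
        have h2 : u x ≤ x := one_sub_exp_neg_le x
        have h3 : (0:ℝ) < x ^ (-β - 1) := Real.rpow_pos_of_pos hx0 _
        rw [Real.norm_eq_abs, abs_of_nonneg (by positivity)]
        have hxx : x * x ^ (-β - 1) = x ^ (-β) := by
          have h5 := Real.rpow_add hx0 1 (-β - 1)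
          have h4 : (1:ℝ) + (-β - 1) = -β := by ring
          rw [h4, Real.rpow_one] at h5
          exact h5.symm
        calc u x * (β * x ^ (-β - 1)) ≤ x * (β * x ^ (-β - 1)) :=
              mul_le_mul_of_nonneg_right h2 (by positivity)
          _ = β * (x * x ^ (-β - 1)) := by ring
          _ = β * x ^ (-β) := by rw [hxx]
    · apply Integrable.mono' (g := fun x => β * x ^ (-β - 1))
      · exact (integrableOn_Ioi_rpow_of_lt (by linarith) zero_lt_one).const_mul β
      · exact (hcont.mono (Ioi_subset_Ioi zero_le_one)).aestronglyMeasurable measurableSet_Ioi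
      · filter_upwards [ae_restrict_mem measurableSet_Ioi] with x hx
        have hx0 : (0:ℝ) < x := lt_trans zero_lt_one hx
        have h1 : 0 ≤ u x := one_sub_exp_neg_nonneg hx0.le
        have h2 : u x ≤ 1 := by
          have : 0 < Real.exp (-x) := Real.exp_pos _
          simp only [hu_def]; linarith
        have h3 : (0:ℝ) < x ^ (-β - 1) := Real.rpow_pos_of_pos hx0 _
        rw [Real.norm_eq_abs, abs_of_nonneg (by positivity)]
        calc u x * (β * x ^ (-β - 1)) ≤ 1 * (β * x ^ (-β - 1)) :=
              mul_le_mul_of_nonneg_right h2 (by positivity)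
          _ = β * x ^ (-β - 1) := by ring
  have h_zero : Tendsto (fun x => u x * v x) (𝓝[>] (0:ℝ)) (𝓝 0) := by
    apply squeeze_zero_norm' (a := fun x => x ^ (1 - β))
    · filter_upwards [self_mem_nhdsWithin] with x hx
      have hx0 : (0:ℝ) < x := hx
      have h1 : 0 ≤ u x := one_sub_exp_neg_nonneg hx0.le
      have h2 : u x ≤ x := one_sub_exp_neg_le x
      have h3 : (0:ℝ) < x ^ (-β) := Real.rpow_pos_of_pos hx0 _
      have : ‖u x * v x‖ = u x * x ^ (-β) := by
        rw [Real.norm_eq_abs, hv_def]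
        rw [show u x * -(x ^ (-β)) = -(u x * x ^ (-β)) by ring, abs_neg,
          abs_of_nonneg (by positivity)]
      rw [this]
      calc u x * x ^ (-β) ≤ x * x ^ (-β) := mul_le_mul_of_nonneg_right h2 h3.le
        _ = x ^ (1 - β) := by
            have h5 := Real.rpow_add hx0 1 (-β)
            have h4 : (1:ℝ) + (-β) = 1 - β := by ring
            rw [h4, Real.rpow_one] at h5
            exact h5.symm
    · have hcont := (Real.continuousAt_rpow_const 0 (1 - β) (Or.inr (by linarith))).tendsto
      rw [Real.zero_rpow (by linarith : (1:ℝ) - β ≠ 0)] at hcont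
      exact tendsto_nhdsWithin_of_tendsto_nhds hcont
  have h_infty : Tendsto (fun x => u x * v x) atTop (𝓝 0) := by
    have h1 : Tendsto u atTop (𝓝 1) := by
      have h := (tendsto_const_nhds (x := (1:ℝ)) (f := atTop)).sub
        Real.tendsto_exp_neg_atTop_nhds_zero
      simpa using h
    have h2 : Tendsto v atTop (𝓝 0) := by
      have := (tendsto_rpow_neg_atTop hβ0).neg
      simpa using this
    have := h1.mul h2
    simpa using this
  have key := integral_Ioi_mul_deriv_eq_deriv_mul hu hv huv' hu'v h_zero h_infty
  rw [key]
  have hGamma : ∫ x in Ioi (0:ℝ), Real.exp (-x) * v x = -Real.Gamma (1 - β) := by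
    rw [Real.Gamma_eq_integral h1β, ← integral_neg]
    apply setIntegral_congr_fun measurableSet_Ioi
    intro x _
    simp only [hv_def]
    have : (1:ℝ) - β - 1 = -β := by ring
    rw [this]
    ring
  rw [hGamma]
  ring
lemma integral_limit_value (hβ0 : 0 < β) (hβ1 : β < 1) (hc : 0 < c) :
    (∫ y in Ioi (0:ℝ), (1 - Real.exp (-(c * y ^ (-1 / β)))))
      = c ^ β * Real.Gamma (1 - β) := by
  have hβne : -β ≠ 0 := by linarith
  have hstep1 : (∫ y in Ioi (0:ℝ), (1 - Real.exp (-(y ^ (-1 / β)))))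
      = Real.Gamma (1 - β) := by
    have h := integral_comp_rpow_Ioi (fun y : ℝ => 1 - Real.exp (-(y ^ (-1 / β))))
      (p := -β) hβne
    rw [← h, ← ibp_integral hβ0 hβ1]
    apply setIntegral_congr_fun measurableSet_Ioi
    intro x hx
    have h1 : ((x ^ (-β) : ℝ)) ^ (-1 / β) = x := by
      rw [← Real.rpow_mul (le_of_lt hx)]
      have : -β * (-1 / β) = 1 := by field_simp
      rw [this, Real.rpow_one]
    simp only [h1, smul_eq_mul, abs_neg, abs_of_pos hβ0]
    ring
  have hb : (0:ℝ) < c ^ β := Real.rpow_pos_of_pos hc β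
  have h := integral_comp_mul_left_Ioi
    (fun y : ℝ => 1 - Real.exp (-(c * y ^ (-1 / β)))) 0 hb
  rw [mul_zero] at h
  have hcongr : (∫ y in Ioi (0:ℝ), (1 - Real.exp (-(c * (c ^ β * y) ^ (-1 / β)))))
      = ∫ y in Ioi (0:ℝ), (1 - Real.exp (-(y ^ (-1 / β)))) := by
    apply setIntegral_congr_fun measurableSet_Ioi
    intro y hy
    simp only []
    have h1 : (c ^ β * y) ^ (-1 / β) = (c ^ β) ^ (-1 / β) * y ^ (-1 / β) :=
      Real.mul_rpow hb.le (le_of_lt hy)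
    have h2 : (c ^ β) ^ (-1 / β) = c⁻¹ := by
      rw [← Real.rpow_mul hc.le]
      have : β * (-1 / β) = -1 := by field_simp
      rw [this, Real.rpow_neg_one]
    rw [h1, h2, ← mul_assoc, mul_inv_cancel₀ (ne_of_gt hc), one_mul]
  rw [hcongr, hstep1] at h
  rw [smul_eq_mul] at h
  field_simp at h
  rw [neg_div]
  linarith [h]
end SantaFeAux

open SantaFeAux in
/-- **Santa Fe / Zipf unique-facts asymptotic.** Let `β ∈ (0,1)` and let
`c = (∑'_{k≥1} k^(−1/β))⁻¹`, so that `p_k = c·k^(−1/β)` is a probability distribution on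
the positive integers. Then the expected number of unique facts
`U(n) = ∑'_{k≥1} (1 − (1 − p_k)^n)` satisfies `lim_{n→∞} U(n)/n^β = c^β · Γ(1 − β)`. -/
theorem santaFe_unique_facts_asymptotic (β : ℝ) (hβ0 : 0 < β) (hβ1 : β < 1)
    (c : ℝ) (hc : c = (∑' k : ℕ+, ((k : ℝ)) ^ (-1 / β))⁻¹)
    (p : ℕ+ → ℝ) (hp : ∀ k : ℕ+, p k = c * ((k : ℝ)) ^ (-1 / β))
    (U : ℕ → ℝ) (hU : ∀ n : ℕ, U n = ∑' k : ℕ+, (1 - (1 - p k) ^ n)) :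
    Tendsto (fun n : ℕ => U n / (n : ℝ) ^ β) atTop
      (nhds (c ^ β * Real.Gamma (1 - β))) := by
  have hβne : -1 / β < -1 := hexp_lt hβ0 hβ1
  have hsum : Summable (fun k : ℕ+ => ((k : ℝ)) ^ (-1 / β)) :=
    (Real.summable_nat_rpow.mpr hβne).subtype _
  have hS1 : (1:ℝ) ≤ ∑' k : ℕ+, ((k : ℝ)) ^ (-1 / β) := by
    have h := Summable.le_tsum hsum 1 (fun j _ => Real.rpow_nonneg (by positivity) _)
    simpa using h
  have hc0 : 0 < c := by rw [hc]; exact inv_pos.mpr (by linarith)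
  have hc1 : c ≤ 1 := by rw [hc]; exact inv_le_one_of_one_le₀ hS1
  have hpk_le : ∀ k : ℕ+, p k ≤ 1 := by
    intro k
    rw [hp]
    have hk1 : (1:ℝ) ≤ ((k : ℕ) : ℝ) := by exact_mod_cast k.one_le
    have h1 : ((k : ℝ)) ^ (-1 / β) ≤ 1 :=
      Real.rpow_le_one_of_one_le_of_nonpos hk1 (by linarith)
    have h2 : (0:ℝ) ≤ ((k : ℝ)) ^ (-1 / β) := Real.rpow_nonneg (by positivity) _
    nlinarith
  have hUg : ∀ n : ℕ, U n = ∑' k : ℕ+, g β c n ((k : ℕ) : ℝ) := by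
    intro n
    rw [hU]
    congr 1
    funext k
    unfold SantaFeAux.g
    have hmax : max 0 (1 - c * ((k : ℝ)) ^ (-1 / β)) = 1 - p k := by
      rw [← hp, max_eq_right (by linarith [hpk_le k])]
    rw [hmax]
  -- limits
  have hJlim : Tendsto (fun n : ℕ => ∫ y in Ioi (0:ℝ), g β (c / n) n y) atTop
      (𝓝 (c ^ β * Real.Gamma (1 - β))) := by
    rw [← integral_limit_value hβ0 hβ1 hc0]
    exact tendsto_J hβ0 hβ1 hc0
  have helim : Tendsto (fun n : ℕ => (((n : ℝ)) ^ β)⁻¹) atTop (𝓝 0) := by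
    apply Tendsto.inv_tendsto_atTop
    exact (tendsto_rpow_atTop hβ0).comp tendsto_natCast_atTop_atTop
  have hlow : Tendsto (fun n : ℕ =>
      (∫ y in Ioi (0:ℝ), g β (c / n) n y) - (((n : ℝ)) ^ β)⁻¹) atTop
      (𝓝 (c ^ β * Real.Gamma (1 - β))) := by
    have := hJlim.sub helim
    simpa using this
  have hhigh : Tendsto (fun n : ℕ =>
      (∫ y in Ioi (0:ℝ), g β (c / n) n y) + (((n : ℝ)) ^ β)⁻¹) atTop
      (𝓝 (c ^ β * Real.Gamma (1 - β))) := by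
    have := hJlim.add helim
    simpa using this
  apply tendsto_of_tendsto_of_tendsto_of_le_of_le' hlow hhigh
  · filter_upwards [eventually_ge_atTop 1] with n hn
    have hn0 : (0:ℝ) < (n:ℝ) := by exact_mod_cast hn
    have hnp : (0:ℝ) < ((n:ℝ)) ^ β := Real.rpow_pos_of_pos hn0 β
    have hscale := integral_g_scale (c := c) hβ0 hn
    have hle := integral_g_le_tsum (n := n) (c := c) hβ0 hβ1 hc0.le
    rw [← hUg n] at hle
    rw [le_div_iff₀ hnp]
    have hcancel : (((n:ℝ)) ^ β)⁻¹ * ((n:ℝ)) ^ β = 1 := inv_mul_cancel₀ (ne_of_gt hnp)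
    nlinarith [hscale, hle]
  · filter_upwards [eventually_ge_atTop 1] with n hn
    have hn0 : (0:ℝ) < (n:ℝ) := by exact_mod_cast hn
    have hnp : (0:ℝ) < ((n:ℝ)) ^ β := Real.rpow_pos_of_pos hn0 β
    have hscale := integral_g_scale (c := c) hβ0 hn
    have hle := tsum_g_le (n := n) (c := c) hβ0 hβ1 hc0.le
    rw [← hUg n] at hle
    rw [div_le_iff₀ hnp]
    have hcancel : (((n:ℝ)) ^ β)⁻¹ * ((n:ℝ)) ^ β = 1 := inv_mul_cancel₀ (ne_of_gt hnp)
    nlinarith [hscale, hle]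
end
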